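/- arXiv:1601.01581 — 5 statements merged into one kernel-verified Lean document; each statement's English description precedes it below -/
import Mathlib

section
/- With G^{(α,β)}_{(1)}(x₁,…,x_n) ∈ K defined by the bialternant formula for the one-box partition λ = (1), one has 1 + (α+β)·G^{(α,β)}_{(1)}(x₁,…,x_n) = ∏_{i=1}^n (1+βx_i)/(1−αx_i). -/
open Finset Polynomial Matrix

lemma prod_Ioi_rev {n : ℕ} {R : Type*} [CommMonoid R] (f : Fin n → Fin n → R) :
    (∏ i : Fin n, ∏ j ∈ Finset.Ioi i, f (Fin.rev j) (Fin.rev i)) =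
      ∏ i : Fin n, ∏ j ∈ Finset.Ioi i, f i j := by
  rw [Finset.prod_sigma', Finset.prod_sigma']
  refine Finset.prod_nbij' (fun p => ⟨Fin.rev p.2, Fin.rev p.1⟩)
    (fun p => ⟨Fin.rev p.2, Fin.rev p.1⟩) ?_ ?_ ?_ ?_ ?_ <;>
    simp [Fin.rev_lt_rev, Fin.rev_rev]

lemma det_rev_vandermonde {n : ℕ} {R : Type*} [CommRing R] (x : Fin n → R) :
    (Matrix.of fun i k : Fin n => x i ^ (n - 1 - (k : ℕ))).det =
      ∏ i : Fin n, ∏ j ∈ Finset.Ioi i, (x i - x j) := by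
  have h : (Matrix.of fun i k : Fin n => x i ^ (n - 1 - (k : ℕ))) =
      (Matrix.vandermonde (x ∘ Fin.rev)).submatrix Fin.revPerm Fin.revPerm := by
    ext i k
    simp only [Matrix.of_apply, Matrix.submatrix_apply, Matrix.vandermonde_apply,
      Function.comp_apply, Fin.revPerm_apply, Fin.rev_rev]
    congr 1
    rw [Fin.val_rev]
    omega
  rw [h, Matrix.det_submatrix_equiv_self, Matrix.det_vandermonde]
  exact prod_Ioi_rev (fun i j => x i - x j)

lemma key_det {n : ℕ} {K : Type*} [CommRing K] (x : Fin n → K) (p : Fin n → K[X])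
    (hdeg : ∀ j, (p j).natDegree < n)
    (hdiag : ∀ j : Fin n, (p j).coeff (n - 1 - (j : ℕ)) = 1)
    (htri : ∀ j k : Fin n, j < k → (p j).coeff (n - 1 - (k : ℕ)) = 0) :
    (Matrix.of fun i j : Fin n => (p j).eval (x i)).det =
      ∏ i : Fin n, ∏ j ∈ Finset.Ioi i, (x i - x j) := by
  have hfac : (Matrix.of fun i j : Fin n => (p j).eval (x i)) =
      (Matrix.of fun i k : Fin n => x i ^ (n - 1 - (k : ℕ))) *
        (Matrix.of fun k j : Fin n => (p j).coeff (n - 1 - (k : ℕ))) := by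
    ext i j
    rw [Matrix.mul_apply]
    simp only [Matrix.of_apply]
    rw [Polynomial.eval_eq_sum_range' (hdeg j)]
    rw [← Fin.sum_univ_eq_sum_range (fun k => (p j).coeff k * x i ^ k)]
    rw [← Equiv.sum_comp (Fin.revPerm : Equiv.Perm (Fin n))
      (fun k => (p j).coeff (k : ℕ) * x i ^ (k : ℕ))]
    refine Finset.sum_congr rfl fun k _ => ?_
    rw [Fin.revPerm_apply, Fin.val_rev]
    have : n - ((k : ℕ) + 1) = n - 1 - (k : ℕ) := by omega
    rw [this, mul_comm]
  rw [hfac, Matrix.det_mul, det_rev_vandermonde]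
  have htriD : (Matrix.of fun k j : Fin n => (p j).coeff (n - 1 - (k : ℕ))).BlockTriangular id := by
    intro k j h
    exact htri j k h
  rw [Matrix.det_of_upperTriangular htriD]
  simp only [Matrix.of_apply, Matrix.diag]
  rw [Finset.prod_congr rfl fun k _ => hdiag k, Finset.prod_const_one, mul_one]

lemma shifted_coeffs {K : Type*} [CommRing K] [Nontrivial K] (n : ℕ) (j : Fin n) (g : K[X])
    (hg : g.natDegree ≤ (j : ℕ)) (h0 : g.coeff 0 = 1) :
    (g * X ^ (n - 1 - (j : ℕ))).natDegree < n ∧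
      (g * X ^ (n - 1 - (j : ℕ))).coeff (n - 1 - (j : ℕ)) = 1 ∧
      ∀ k : Fin n, j < k → (g * X ^ (n - 1 - (j : ℕ))).coeff (n - 1 - (k : ℕ)) = 0 := by
  have hj := j.isLt
  refine ⟨?_, ?_, ?_⟩
  · calc (g * X ^ (n - 1 - (j : ℕ))).natDegree
        ≤ g.natDegree + (X ^ (n - 1 - (j : ℕ)) : K[X]).natDegree := natDegree_mul_le
    _ ≤ (j : ℕ) + (n - 1 - (j : ℕ)) := by rw [natDegree_X_pow]; omega
    _ < n := by omega
  · rw [Polynomial.coeff_mul_X_pow', if_pos le_rfl, Nat.sub_self, h0]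
  · intro k hk
    have hk' : (j : ℕ) < (k : ℕ) := hk
    have hkn := k.isLt
    rw [Polynomial.coeff_mul_X_pow', if_neg (by omega)]


/-- The canonical stable Grothendieck polynomial `G^{(α,β)}_λ(y₁,…,yₙ)`, defined by the
bialternant formula
`G^{(α,β)}_λ = det[ yᵢ^{λⱼ+n-j} (1+βyᵢ)^{j-1} (1-αyᵢ)^{-λⱼ} ] / ∏_{i<j} (yᵢ - yⱼ)`.
Here `lam j` is the part `λ_{j+1}` (0-indexed `j`). -/
noncomputable def Gb {K : Type*} [Field K] (n : ℕ) (α β : K) (lam : Fin n → ℕ)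
    (y : Fin n → K) : K :=
  (Matrix.of fun i j : Fin n =>
      y i ^ (lam j + (n - 1 - (j : ℕ))) * (1 + β * y i) ^ (j : ℕ) *
        ((1 - α * y i) ^ lam j)⁻¹).det /
    ∏ i : Fin n, ∏ j ∈ Finset.Ioi i, (y i - y j)

/-- with `G^{(α,β)}_{(1)}(x₁,…,xₙ)` defined by the bialternant formula for the
one-box partition `λ = (1)`, one has
`1 + (α+β)·G^{(α,β)}_{(1)}(x₁,…,xₙ) = ∏_{i=1}^n (1+βxᵢ)/(1-αxᵢ)`.
(Stated over an arbitrary field with the nondegeneracy conditions that hold automatically in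
the field of rational functions `ℚ(α, β, x₁, …, xₙ)`.) -/
theorem stmt0 {K : Type*} [Field K] (n : ℕ) (hn : 0 < n) (α β : K) (x : Fin n → K)
    (hx : Function.Injective x) (hα : ∀ i, 1 - α * x i ≠ 0) :
    1 + (α + β) * Gb n α β (fun j => if (j : ℕ) = 0 then 1 else 0) x =
      ∏ i : Fin n, (1 + β * x i) / (1 - α * x i) := by
  haveI : NeZero n := ⟨hn.ne'⟩
  set P : K := ∏ i : Fin n, ∏ j ∈ Finset.Ioi i, (x i - x j) with hPdef
  have hP : P ≠ 0 := by
    rw [hPdef]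
    refine Finset.prod_ne_zero_iff.mpr fun i _ => Finset.prod_ne_zero_iff.mpr fun j hj => ?_
    exact sub_ne_zero.mpr fun h => absurd (hx h) (Finset.mem_Ioi.mp hj).ne
  -- polynomial families
  set q : Fin n → K[X] := fun j =>
    (if (j : ℕ) = 0 then 1 else (1 + C β * X) ^ ((j : ℕ) - 1) * (1 - C α * X)) *
      X ^ (n - 1 - (j : ℕ)) with hq
  set r : Fin n → K[X] := fun j =>
    (1 + C β * X) ^ (j : ℕ) * X ^ (n - 1 - (j : ℕ)) with hr
  have h1β : (1 + C β * X : K[X]).natDegree ≤ 1 :=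
    le_trans (natDegree_add_le _ _) (by
      simp only [natDegree_one, max_le_iff]
      exact ⟨Nat.zero_le 1, le_trans (natDegree_C_mul_le _ _) natDegree_X_le⟩)
  have h1α : (1 - C α * X : K[X]).natDegree ≤ 1 :=
    le_trans (natDegree_sub_le _ _) (by
      simp only [natDegree_one, max_le_iff]
      exact ⟨Nat.zero_le 1, le_trans (natDegree_C_mul_le _ _) natDegree_X_le⟩)
  have qf : ∀ j : Fin n,
      (q j).natDegree < n ∧ (q j).coeff (n - 1 - (j : ℕ)) = 1 ∧
        ∀ k : Fin n, j < k → (q j).coeff (n - 1 - (k : ℕ)) = 0 := by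
    intro j
    refine shifted_coeffs n j _ ?_ ?_
    · by_cases hj : (j : ℕ) = 0
      · simp [hj]
      · rw [if_neg hj]
        refine le_trans natDegree_mul_le (le_trans (Nat.add_le_add
          (le_trans natDegree_pow_le (Nat.mul_le_mul le_rfl h1β)) h1α) ?_)
        omega
    · by_cases hj : (j : ℕ) = 0
      · simp [hj]
      · rw [if_neg hj, Polynomial.coeff_zero_eq_eval_zero]
        simp
  have rf : ∀ j : Fin n,
      (r j).natDegree < n ∧ (r j).coeff (n - 1 - (j : ℕ)) = 1 ∧
        ∀ k : Fin n, j < k → (r j).coeff (n - 1 - (k : ℕ)) = 0 := by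
    intro j
    refine shifted_coeffs n j _ ?_ ?_
    · refine le_trans natDegree_pow_le (le_trans (Nat.mul_le_mul le_rfl h1β) ?_)
      omega
    · rw [Polynomial.coeff_zero_eq_eval_zero]; simp
  have hQ : (Matrix.of fun i j : Fin n => (q j).eval (x i)).det = P :=
    key_det x q (fun j => (qf j).1) (fun j => (qf j).2.1) (fun j k h => (qf j).2.2 k h)
  have hR : (Matrix.of fun i j : Fin n => (r j).eval (x i)).det = P :=
    key_det x r (fun j => (rf j).1) (fun j => (rf j).2.1) (fun j k h => (rf j).2.2 k h)
  -- matrices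
  set M : Matrix (Fin n) (Fin n) K := Matrix.of fun i j : Fin n =>
      x i ^ ((if (j : ℕ) = 0 then 1 else 0) + (n - 1 - (j : ℕ))) * (1 + β * x i) ^ (j : ℕ) *
        ((1 - α * x i) ^ (if (j : ℕ) = 0 then 1 else 0))⁻¹ with hM
  have hGb : Gb n α β (fun j => if (j : ℕ) = 0 then 1 else 0) x = M.det / P := rfl
  set N : Matrix (Fin n) (Fin n) K :=
    Matrix.of fun i j : Fin n => (1 - α * x i) * M i j with hN
  set A : Matrix (Fin n) (Fin n) K :=
    Matrix.of fun i j : Fin n => (1 + β * x i) * (q j).eval (x i) with hA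
  set B : Matrix (Fin n) (Fin n) K :=
    Matrix.of fun i j : Fin n => (1 - α * x i) * (r j).eval (x i) with hB
  have hNdet : N.det = (∏ i, (1 - α * x i)) * M.det := Matrix.det_mul_column _ _
  have hAdet : A.det = (∏ i, (1 + β * x i)) * P := by
    rw [hA]
    refine (Matrix.det_mul_column (fun i => 1 + β * x i) (Matrix.of fun i j => (q j).eval (x i))).trans ?_
    exact congrArg (fun d => (∏ i, (1 + β * x i)) * d) hQ
  have hBdet : B.det = (∏ i, (1 - α * x i)) * P := by
    rw [hB]
    refine (Matrix.det_mul_column (fun i => 1 - α * x i) (Matrix.of fun i j => (r j).eval (x i))).trans ?_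
    exact congrArg (fun d => (∏ i, (1 - α * x i)) * d) hR
  -- column identifications
  have hAN : A = N.updateCol 0 (fun i => (1 + β * x i) * x i ^ (n - 1)) := by
    ext i j
    rw [Matrix.updateCol_apply]
    by_cases hj : j = 0
    · have hj0 : (j : ℕ) = 0 := by rw [hj]; simp
      rw [if_pos hj, hA, hq]
      simp [hj0, hj]
    · have hj0 : (j : ℕ) ≠ 0 := fun h => hj (Fin.ext (by simpa using h))
      have hpow : (1 + β * x i) * (1 + β * x i) ^ ((j : ℕ) - 1) = (1 + β * x i) ^ (j : ℕ) := by
        rw [← pow_succ']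
        congr 1
        omega
      rw [if_neg hj, hA, hN, hM, hq]
      simp only [Matrix.of_apply, if_neg hj0, pow_zero, inv_one, mul_one, eval_mul, eval_pow,
        eval_add, eval_sub, eval_one, eval_C, eval_X, Nat.zero_add, zero_add]
      rw [← hpow]
      ring
  have hBN : B = N.updateCol 0 (fun i => (1 - α * x i) * x i ^ (n - 1)) := by
    ext i j
    rw [Matrix.updateCol_apply]
    by_cases hj : j = 0
    · have hj0 : (j : ℕ) = 0 := by rw [hj]; simp
      rw [if_pos hj, hB, hr]
      simp [hj0]
    · have hj0 : (j : ℕ) ≠ 0 := fun h => hj (Fin.ext (by simpa using h))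
      rw [if_neg hj, hB, hN, hM, hr]
      simp only [Matrix.of_apply, if_neg hj0, pow_zero, inv_one, mul_one, eval_mul, eval_pow,
        eval_add, eval_sub, eval_one, eval_C, eval_X, zero_add]
      ring
  have hcol : ∀ i, N i 0 = x i ^ n := by
    intro i
    rw [hN, hM]
    simp only [Matrix.of_apply, Fin.val_zero, if_pos rfl, if_true, eq_self_iff_true, pow_one,
      pow_zero, mul_one, Nat.sub_zero]
    rw [show (1 : ℕ) + (n - 1) = n by omega]
    field_simp
    rw [mul_comm, mul_div_assoc, div_self (hα i), mul_one]
  have hNcol : N.updateCol 0 (fun i => x i ^ n) = N := by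
    rw [show (fun i => x i ^ n) = (fun j => N j 0) from funext fun i => (hcol i).symm,
      Matrix.updateCol_eq_self]
  have hsplit : A.det = (α + β) * N.det + B.det := by
    rw [hAN, hBN]
    have hxn : ∀ i, x i ^ n = x i ^ (n - 1) * x i := by
      intro i
      rw [← pow_succ]
      congr 1
      omega
    have hu : (fun i => (1 + β * x i) * x i ^ (n - 1)) =
        ((α + β) • fun i => x i ^ n) + fun i => (1 - α * x i) * x i ^ (n - 1) := by
      funext i
      simp only [Pi.add_apply, Pi.smul_apply, smul_eq_mul, hxn i]
      ring
    rw [hu, Matrix.det_updateCol_add, Matrix.det_updateCol_smul, hNcol]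
  -- final algebra
  rw [hGb, Finset.prod_div_distrib]
  have h2 : (∏ i, (1 - α * x i)) ≠ 0 := Finset.prod_ne_zero_iff.mpr fun i _ => hα i
  have hstar : (∏ i, (1 + β * x i)) * P =
      (α + β) * ((∏ i, (1 - α * x i)) * M.det) + (∏ i, (1 - α * x i)) * P := by
    rw [← hNdet, ← hAdet, ← hBdet, hsplit]
  field_simp
  linear_combination -hstar
end

section
/- For every partition λ with at most n nonzero parts, G^{(α,β)}_λ(x₁,…,x_n) = G^{(0,α+β)}_λ(x₁/(1−αx₁), …, x_n/(1−αx_n)); that is, the bialternant expression with parameters (0, α+β) evaluated at the pairwise distinct rational functions x_i/(1−αx_i) equals G^{(α,β)}_λ(x₁,…,x_n). -/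
/-- Pairwise product over `i < j` of `c i * c j` equals `∏ i, c i ^ (n-1)`. -/
lemma prod_Ioi_mul_pair {K : Type*} [CommMonoid K] (n : ℕ) (c : Fin n → K) :
    ∏ i : Fin n, ∏ j ∈ Finset.Ioi i, (c i * c j) = ∏ i : Fin n, c i ^ (n - 1) := by
  have h1 : ∏ i : Fin n, ∏ j ∈ Finset.Ioi i, (c i * c j)
      = (∏ i : Fin n, ∏ _j ∈ Finset.Ioi i, c i) *
        ∏ i : Fin n, ∏ j ∈ Finset.Ioi i, c j := by
    rw [← Finset.prod_mul_distrib]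
    refine Finset.prod_congr rfl fun i _ => ?_
    exact Finset.prod_mul_distrib (f := fun _ => c i) (g := fun j => c j)
  have h2 : (∏ i : Fin n, ∏ _j ∈ Finset.Ioi i, c i)
      = ∏ i : Fin n, c i ^ (n - 1 - (i : ℕ)) := by
    refine Finset.prod_congr rfl fun i _ => ?_
    rw [Finset.prod_const, Fin.card_Ioi]
  have h3 : (∏ i : Fin n, ∏ j ∈ Finset.Ioi i, c j)
      = ∏ j : Fin n, c j ^ (j : ℕ) := by
    rw [Finset.prod_comm' (t' := Finset.univ) (s' := fun j => Finset.Iio j)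
      (by intro i j; simp [Finset.mem_Ioi, Finset.mem_Iio])]
    refine Finset.prod_congr rfl fun j _ => ?_
    rw [Finset.prod_const, Fin.card_Iio]
  rw [h1, h2, h3, ← Finset.prod_mul_distrib]
  refine Finset.prod_congr rfl fun i _ => ?_
  rw [← pow_add]
  congr 1
  have := i.isLt
  omega

/-- for every partition `λ` with at most `n` nonzero parts,
`G^{(α,β)}_λ(x₁,…,xₙ) = G^{(0,α+β)}_λ(x₁/(1-αx₁), …, xₙ/(1-αxₙ))`.
(Stated over an arbitrary field with the nondegeneracy conditions that hold automatically in
`ℚ(α, β, x₁, …, xₙ)`; there the points `xᵢ/(1-αxᵢ)` are automatically pairwise distinct.) -/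
theorem stmt1 {K : Type*} [Field K] (n : ℕ) (hn : 0 < n) (α β : K) (x : Fin n → K)
    (hx : Function.Injective x) (hα : ∀ i, 1 - α * x i ≠ 0)
    (lam : Fin n → ℕ) (hlam : Antitone lam) :
    Gb n α β lam x = Gb n 0 (α + β) lam (fun i => x i / (1 - α * x i)) := by
  classical
  set c : Fin n → K := fun i => 1 - α * x i with hc
  set z : Fin n → K := fun i => x i / c i with hz
  have hcne : ∀ i, c i ≠ 0 := hα
  -- matrix entry identity
  have hmat : (Matrix.of fun i j : Fin n =>
      z i ^ (lam j + (n - 1 - (j : ℕ))) * (1 + (α + β) * z i) ^ (j : ℕ) *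
        ((1 - 0 * z i) ^ lam j)⁻¹)
      = Matrix.of fun i j : Fin n => (c i ^ (n - 1))⁻¹ *
        (x i ^ (lam j + (n - 1 - (j : ℕ))) * (1 + β * x i) ^ (j : ℕ) *
          ((1 - α * x i) ^ lam j)⁻¹) := by
    ext i j
    simp only [Matrix.of_apply, zero_mul, sub_zero, one_pow, inv_one, mul_one]
    have h1 : 1 + (α + β) * z i = (1 + β * x i) / c i := by
      rw [hz, eq_div_iff (hcne i), add_mul, one_mul, mul_assoc,
        div_mul_cancel₀ _ (hcne i)]
      simp only [hc]
      ring
    have he' : lam j + (n - 1 - (j : ℕ)) + (j : ℕ) = (n - 1) + lam j := by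
      have := j.isLt
      omega
    rw [h1, hz]
    simp only [div_pow, div_eq_mul_inv, mul_pow, ← inv_pow, hc]
    calc x i ^ (lam j + (n - 1 - (j : ℕ))) * (1 - α * x i)⁻¹ ^ (lam j + (n - 1 - (j : ℕ))) *
          ((1 + β * x i) ^ (j : ℕ) * (1 - α * x i)⁻¹ ^ (j : ℕ))
        = (x i ^ (lam j + (n - 1 - (j : ℕ))) * (1 + β * x i) ^ (j : ℕ)) *
          ((1 - α * x i)⁻¹ ^ (lam j + (n - 1 - (j : ℕ))) * (1 - α * x i)⁻¹ ^ (j : ℕ)) := by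
          ring
      _ = (x i ^ (lam j + (n - 1 - (j : ℕ))) * (1 + β * x i) ^ (j : ℕ)) *
          ((1 - α * x i)⁻¹ ^ (n - 1) * (1 - α * x i)⁻¹ ^ lam j) := by
          rw [← pow_add, he', pow_add (1 - α * x i)⁻¹ (n - 1) (lam j)]
      _ = (1 - α * x i)⁻¹ ^ (n - 1) *
          (x i ^ (lam j + (n - 1 - (j : ℕ))) * (1 + β * x i) ^ (j : ℕ) *
            (1 - α * x i)⁻¹ ^ lam j) := by
          ring
  -- denominator identity
  have hden : (∏ i : Fin n, ∏ j ∈ Finset.Ioi i, (z i - z j))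
      = (∏ i : Fin n, (c i ^ (n - 1))⁻¹) *
        ∏ i : Fin n, ∏ j ∈ Finset.Ioi i, (x i - x j) := by
    have key : ∀ i j : Fin n, z i - z j = (c i * c j)⁻¹ * (x i - x j) := by
      intro i j
      rw [hz]
      rw [div_sub_div _ _ (hcne i) (hcne j), inv_mul_eq_div]
      congr 1
      simp only [hc]
      ring
    calc ∏ i : Fin n, ∏ j ∈ Finset.Ioi i, (z i - z j)
        = ∏ i : Fin n, ∏ j ∈ Finset.Ioi i, ((c i * c j)⁻¹ * (x i - x j)) := by
          refine Finset.prod_congr rfl fun i _ => Finset.prod_congr rfl fun j _ => key i j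
      _ = (∏ i : Fin n, ∏ j ∈ Finset.Ioi i, (c i * c j)⁻¹) *
          ∏ i : Fin n, ∏ j ∈ Finset.Ioi i, (x i - x j) := by
          rw [← Finset.prod_mul_distrib]
          refine Finset.prod_congr rfl fun i _ => ?_
          exact Finset.prod_mul_distrib (f := fun j => (c i * c j)⁻¹)
            (g := fun j => x i - x j)
      _ = (∏ i : Fin n, (c i ^ (n - 1))⁻¹) *
          ∏ i : Fin n, ∏ j ∈ Finset.Ioi i, (x i - x j) := by
          congr 1
          have := prod_Ioi_mul_pair n (fun i => (c i)⁻¹)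
          simp only [← mul_inv, ← inv_pow] at this ⊢
          exact this
  have hPne : (∏ i : Fin n, (c i ^ (n - 1))⁻¹) ≠ 0 := by
    refine Finset.prod_ne_zero_iff.mpr fun i _ => ?_
    exact inv_ne_zero (pow_ne_zero _ (hcne i))
  unfold Gb
  have hdc := Matrix.det_mul_column (fun i => (c i ^ (n - 1))⁻¹) (Matrix.of fun i j : Fin n =>
      x i ^ (lam j + (n - 1 - (j : ℕ))) * (1 + β * x i) ^ (j : ℕ) * ((1 - α * x i) ^ lam j)⁻¹)
  simp only [Matrix.of_apply] at hdc
  rw [hmat, hden, hdc, mul_div_mul_left _ _ hPne]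
end

section
/- For every partition λ with at most n nonzero parts, G^{(α,β)}_λ(x₁/(1−βx₁), …, x_n/(1−βx_n)) = G^{(α+β,0)}_λ(x₁,…,x_n); that is, the bialternant expression with parameters (α, β) evaluated at the pairwise distinct rational functions x_i/(1−βx_i) equals the bialternant expression with parameters (α+β, 0) evaluated at x₁,…,x_n. -/
lemma prod_pairs_eq {K : Type*} [CommMonoid K] (n : ℕ) (c : Fin n → K) :
    (∏ i : Fin n, ∏ j ∈ Finset.Ioi i, (c i * c j)) = ∏ i : Fin n, c i ^ (n - 1) := by
  have h1 : (∏ i : Fin n, ∏ j ∈ Finset.Ioi i, (c i * c j))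
      = (∏ i : Fin n, ∏ _j ∈ Finset.Ioi i, c i) *
        (∏ i : Fin n, ∏ j ∈ Finset.Ioi i, c j) := by
    rw [← Finset.prod_mul_distrib]
    congr 1; ext i; rw [← Finset.prod_mul_distrib]
  have h2 : (∏ i : Fin n, ∏ j ∈ Finset.Ioi i, c j)
      = ∏ j : Fin n, ∏ _i ∈ Finset.Iio j, c j := by
    refine Finset.prod_comm' ?_
    intro i j
    simp [Finset.mem_Ioi, Finset.mem_Iio]
  rw [h1, h2, ← Finset.prod_mul_distrib]
  refine Finset.prod_congr rfl fun i _ => ?_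
  rw [Finset.prod_const, Finset.prod_const, ← pow_add, Fin.card_Ioi, Fin.card_Iio]
  congr 1
  have := i.isLt
  omega

/-- for every partition `λ` with at most `n` nonzero parts,
`G^{(α,β)}_λ(x₁/(1-βx₁), …, xₙ/(1-βxₙ)) = G^{(α+β,0)}_λ(x₁,…,xₙ)`.
(Stated over an arbitrary field with the nondegeneracy conditions that hold automatically in
`ℚ(α, β, x₁, …, xₙ)`; there the points `xᵢ/(1-βxᵢ)` are automatically pairwise distinct.) -/
theorem stmt2 {K : Type*} [Field K] (n : ℕ) (hn : 0 < n) (α β : K) (x : Fin n → K)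
    (hx : Function.Injective x) (hβ : ∀ i, 1 - β * x i ≠ 0)
    (hαβ : ∀ i, 1 - (α + β) * x i ≠ 0)
    (lam : Fin n → ℕ) (hlam : Antitone lam) :
    Gb n α β lam (fun i => x i / (1 - β * x i)) = Gb n (α + β) 0 lam x := by
  classical
  set c : Fin n → K := fun i => (1 - β * x i)⁻¹ with hc
  have hc0 : ∀ i, c i ≠ 0 := fun i => inv_ne_zero (hβ i)
  have h1 : ∀ i, 1 + β * (x i / (1 - β * x i)) = c i := by
    intro i
    rw [hc]
    refine eq_inv_of_mul_eq_one_left ?_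
    rw [mul_div_assoc', add_mul, one_mul, div_mul_cancel₀ _ (hβ i)]
    ring
  have h2 : ∀ i, 1 - α * (x i / (1 - β * x i)) = (1 - (α + β) * x i) * c i := by
    intro i
    rw [hc, eq_mul_inv_iff_mul_eq₀ (hβ i), mul_div_assoc', sub_mul, one_mul,
      div_mul_cancel₀ _ (hβ i)]
    ring
  have h3 : ∀ i, x i / (1 - β * x i) = x i * c i := fun i => div_eq_mul_inv _ _
  -- Matrix identity
  have hmat : (Matrix.of fun i j : Fin n =>
      (fun i => x i / (1 - β * x i)) i ^ (lam j + (n - 1 - (j : ℕ))) *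
        (1 + β * (fun i => x i / (1 - β * x i)) i) ^ (j : ℕ) *
        ((1 - α * (fun i => x i / (1 - β * x i)) i) ^ lam j)⁻¹)
      = Matrix.of fun i j : Fin n => c i ^ (n - 1) *
          (x i ^ (lam j + (n - 1 - (j : ℕ))) * (1 + (0 : K) * x i) ^ (j : ℕ) *
            ((1 - (α + β) * x i) ^ lam j)⁻¹) := by
    ext i j
    simp only [Matrix.of_apply]
    rw [h1, h2, h3]
    have hj : (j : ℕ) < n := j.isLt
    have hexp : lam j + (n - 1 - (j : ℕ)) + (j : ℕ) = n - 1 + lam j := by omega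
    have hcpow : c i ^ (lam j + (n - 1 - (j : ℕ))) * c i ^ (j : ℕ)
        = c i ^ (n - 1) * c i ^ lam j := by
      rw [← pow_add, ← pow_add, hexp]
    rw [mul_pow, mul_pow, mul_inv]
    rw [zero_mul, add_zero, one_pow]
    calc x i ^ (lam j + (n - 1 - (j : ℕ))) * c i ^ (lam j + (n - 1 - (j : ℕ))) *
          c i ^ (j : ℕ) * (((1 - (α + β) * x i) ^ lam j)⁻¹ * (c i ^ lam j)⁻¹)
        = x i ^ (lam j + (n - 1 - (j : ℕ))) * (c i ^ (lam j + (n - 1 - (j : ℕ))) *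
            c i ^ (j : ℕ)) * (((1 - (α + β) * x i) ^ lam j)⁻¹ * (c i ^ lam j)⁻¹) := by
          ring
      _ = x i ^ (lam j + (n - 1 - (j : ℕ))) * (c i ^ (n - 1) * c i ^ lam j) *
            (((1 - (α + β) * x i) ^ lam j)⁻¹ * (c i ^ lam j)⁻¹) := by rw [hcpow]
      _ = c i ^ (n - 1) * (x i ^ (lam j + (n - 1 - (j : ℕ))) * 1 *
            ((1 - (α + β) * x i) ^ lam j)⁻¹) *
            (c i ^ lam j * (c i ^ lam j)⁻¹) := by ring
      _ = _ := by
          rw [mul_inv_cancel₀ (pow_ne_zero _ (hc0 i)), mul_one]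
  -- Denominator identity
  have hden : (∏ i : Fin n, ∏ j ∈ Finset.Ioi i,
        ((fun i => x i / (1 - β * x i)) i - (fun i => x i / (1 - β * x i)) j))
      = (∏ i : Fin n, ∏ j ∈ Finset.Ioi i, (x i - x j)) * ∏ i : Fin n, c i ^ (n - 1) := by
    have : ∀ i j : Fin n, x i / (1 - β * x i) - x j / (1 - β * x j)
        = (x i - x j) * (c i * c j) := by
      intro i j
      rw [hc, div_sub_div _ _ (hβ i) (hβ j), div_eq_mul_inv, mul_inv]
      congr 1
      ring
    simp only [this]
    rw [← prod_pairs_eq n c, ← Finset.prod_mul_distrib]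
    refine Finset.prod_congr rfl fun i _ => ?_
    rw [← Finset.prod_mul_distrib]
  unfold Gb
  have hdm := Matrix.det_mul_column (fun i => c i ^ (n - 1)) (Matrix.of fun i j : Fin n =>
    x i ^ (lam j + (n - 1 - (j : ℕ))) * (1 + (0 : K) * x i) ^ (j : ℕ) *
      ((1 - (α + β) * x i) ^ lam j)⁻¹)
  simp only [Matrix.of_apply] at hdm
  rw [hmat, hden, hdm]
  rw [mul_comm (∏ i : Fin n, c i ^ (n-1)) _]
  exact mul_div_mul_right _ _ (Finset.prod_ne_zero_iff.mpr fun i _ => pow_ne_zero _ (hc0 i))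
end

section
/- Stability: for every partition λ with at most n nonzero parts, the (n+1)-variable canonical stable Grothendieck polynomial evaluated with last variable equal to 0 equals the n-variable one: G^{(α,β)}_λ(x₁,…,x_n,0) = G^{(α,β)}_λ(x₁,…,x_n). Here G^{(α,β)}_λ(x₁,…,x_n,0) means the (n+1)×(n+1) bialternant determinant det[ y_i^{λ_j+n+1−j} (1+βy_i)^{j−1} (1−αy_i)^{−λ_j} ]_{1≤i,j≤n+1} with y_i = x_i for i ≤ n and y_{n+1} = 0, divided by ∏_{1≤i<j≤n}(x_i−x_j)·∏_{i=1}^n x_i. -/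
/-- stability: for every partition `λ` with at most `n` nonzero parts,
`G^{(α,β)}_λ(x₁,…,xₙ,0) = G^{(α,β)}_λ(x₁,…,xₙ)`, where the left-hand side is the
`(n+1)×(n+1)` bialternant determinant with `y_i = x_i` for `i ≤ n`, `y_{n+1} = 0`
(and `λ_{n+1} = 0`), divided by `∏_{1≤i<j≤n}(xᵢ-xⱼ)·∏_{i=1}^n xᵢ`. -/
theorem stmt3 {K : Type*} [Field K] (n : ℕ) (hn : 0 < n) (α β : K) (x : Fin n → K)
    (hx : Function.Injective x) (hx0 : ∀ i, x i ≠ 0) (hα : ∀ i, 1 - α * x i ≠ 0)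
    (lam : Fin n → ℕ) (hlam : Antitone lam) :
    (Matrix.of fun i j : Fin (n + 1) =>
        (Fin.snoc x (0 : K) : Fin (n + 1) → K) i ^
            ((Fin.snoc lam 0 : Fin (n + 1) → ℕ) j + (n - (j : ℕ))) *
          (1 + β * (Fin.snoc x (0 : K) : Fin (n + 1) → K) i) ^ (j : ℕ) *
          ((1 - α * (Fin.snoc x (0 : K) : Fin (n + 1) → K) i) ^
            (Fin.snoc lam 0 : Fin (n + 1) → ℕ) j)⁻¹).det /
      ((∏ i : Fin n, ∏ j ∈ Finset.Ioi i, (x i - x j)) * ∏ i : Fin n, x i) =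
    Gb n α β lam x := by
  set A : Matrix (Fin (n+1)) (Fin (n+1)) K := Matrix.of fun i j : Fin (n + 1) =>
        (Fin.snoc x (0 : K) : Fin (n + 1) → K) i ^
            ((Fin.snoc lam 0 : Fin (n + 1) → ℕ) j + (n - (j : ℕ))) *
          (1 + β * (Fin.snoc x (0 : K) : Fin (n + 1) → K) i) ^ (j : ℕ) *
          ((1 - α * (Fin.snoc x (0 : K) : Fin (n + 1) → K) i) ^
            (Fin.snoc lam 0 : Fin (n + 1) → ℕ) j)⁻¹ with hA
  set B : Matrix (Fin n) (Fin n) K := Matrix.of fun i j : Fin n =>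
      x i ^ (lam j + (n - 1 - (j : ℕ))) * (1 + β * x i) ^ (j : ℕ) *
        ((1 - α * x i) ^ lam j)⁻¹ with hB
  have hdet : A.det = (∏ i : Fin n, x i) * B.det := by
    rw [Matrix.det_succ_row A (Fin.last n)]
    rw [Finset.sum_eq_single (Fin.last n)]
    · have h1 : A (Fin.last n) (Fin.last n) = 1 := by
        simp [hA, Fin.snoc_last]
      rw [h1]
      have h2 : A.submatrix (Fin.last n).succAbove (Fin.last n).succAbove =
          Matrix.of fun i j : Fin n => x i * B i j := by
        ext i j
        have hj : (j : ℕ) < n := j.isLt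
        have hexp : lam j + (n - (j : ℕ)) = (lam j + (n - 1 - (j : ℕ))) + 1 := by omega
        simp only [Matrix.submatrix_apply, Fin.succAbove_last, hA, hB, Matrix.of_apply,
          Fin.snoc_castSucc, Fin.coe_castSucc, hexp, pow_succ]
        ring
      rw [h2, Matrix.det_mul_column]
      simp
    · intro j _ hj
      have hj' : (j : ℕ) < n := by
        rcases Fin.lt_or_eq_of_le (Fin.le_last j) with h | h
        · exact h
        · exact absurd h hj
      have : A (Fin.last n) j = 0 := by
        have : (Fin.snoc lam 0 : Fin (n + 1) → ℕ) j + (n - (j : ℕ)) ≠ 0 := by omega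
        simp [hA, Fin.snoc_last, zero_pow this]
      rw [this]; ring
    · simp
  rw [hdet, Gb, ← hB]
  rw [mul_comm (∏ i : Fin n, ∏ j ∈ Finset.Ioi i, (x i - x j)) (∏ i : Fin n, x i)]
  rw [mul_div_mul_left _ _ (Finset.prod_ne_zero_iff.mpr fun i _ => hx0 i)]
end

section
/- Let R = ℚ[α, β, x₁, …, x_n] and define, for k ≥ 1, g_{(k)} := ∑_{i=1}^k α^{k−i} C(k−1, i−1) h_i(x₁,…,x_n) and g_{(1^k)} := ∑_{i=1}^k β^{k−i} C(k−1, i−1) e_i(x₁,…,x_n). Then in the formal power series ring R[[t]]: (i) 1 + ∑_{k≥1} (t·(1+αt)^{−1})^k · g_{(k)} = ∏_{j=1}^n (1 − x_j t)^{−1}, and (ii) 1 + ∑_{k≥1} (t·(1+βt)^{−1})^k · g_{(1^k)} = ∏_{j=1}^n (1 + x_j t). Here 1+αt, 1+βt and 1−x_jt are invertible in R[[t]] since their constant coefficients equal 1, and the infinite sums make sense coefficientwise because (t·(1+αt)^{−1})^k has t-adic order k. -/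
/-- The complete homogeneous symmetric polynomial `h_m(y₁,…,yₙ)`. -/
noncomputable def hps {K : Type*} [Field K] (n m : ℕ) (y : Fin n → K) : K :=
  ∑ c ∈ Finset.Nat.antidiagonalTuple n m, ∏ i, y i ^ c i

/-- The elementary symmetric polynomial `e_m(y₁,…,yₙ)` (zero for `m > n`). -/
noncomputable def eps {K : Type*} [Field K] (n m : ℕ) (y : Fin n → K) : K :=
  ∑ S ∈ Finset.powersetCard m (Finset.univ : Finset (Fin n)), ∏ i ∈ S, y i

/-- The dual canonical stable Grothendieck polynomial for a one-row shape:
`g_{(k)} = ∑_{i=1}^k α^{k-i} C(k-1, i-1) h_i`. -/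
noncomputable def grow {K : Type*} [Field K] (n : ℕ) (α : K) (x : Fin n → K) (k : ℕ) : K :=
  ∑ i ∈ Finset.Icc 1 k, α ^ (k - i) * ((k - 1).choose (i - 1) : K) * hps n i x

/-- The dual canonical stable Grothendieck polynomial for a one-column shape:
`g_{(1^k)} = ∑_{i=1}^k β^{k-i} C(k-1, i-1) e_i`. -/
noncomputable def gcol {K : Type*} [Field K] (n : ℕ) (β : K) (x : Fin n → K) (k : ℕ) : K :=
  ∑ i ∈ Finset.Icc 1 k, β ^ (k - i) * ((k - 1).choose (i - 1) : K) * eps n i x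

section Aux
open PowerSeries Finset

variable {K : Type*} [Field K]


lemma geom_mul (a : K) :
    ((1 : K⟦X⟧) - PowerSeries.C a * X) * PowerSeries.mk (fun j => a ^ j) = 1 := by
  ext m
  rw [sub_mul, one_mul, map_sub, PowerSeries.coeff_one]
  cases m with
  | zero => simp
  | succ m =>
    have h : PowerSeries.C a * X * PowerSeries.mk (fun j => a ^ j)
        = (PowerSeries.C a * PowerSeries.mk (fun j => a ^ j)) * X := by ring
    rw [h, PowerSeries.coeff_succ_mul_X, PowerSeries.coeff_C_mul, PowerSeries.coeff_mk,
      PowerSeries.coeff_mk]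
    simp [pow_succ, mul_comm]

lemma inv_one_sub (a : K) :
    ((1 : K⟦X⟧) - PowerSeries.C a * X)⁻¹ = PowerSeries.mk (fun j => a ^ j) := by
  rw [PowerSeries.inv_eq_iff_mul_eq_one, mul_comm]
  · exact geom_mul a
  · simp

lemma inv_one_add (a : K) :
    ((1 : K⟦X⟧) + PowerSeries.C a * X)⁻¹ = PowerSeries.mk (fun j => (-a) ^ j) := by
  have h : (1 : K⟦X⟧) + PowerSeries.C a * X = 1 - PowerSeries.C (-a) * X := by
    rw [map_neg]; ring
  rw [h, inv_one_sub]



lemma coeff_geom_pow (b : K) : ∀ k, 1 ≤ k → ∀ m : ℕ,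
    PowerSeries.coeff m ((PowerSeries.mk (fun j => b ^ j) : K⟦X⟧) ^ k)
      = ((m + k - 1).choose m : K) * b ^ m := by
  intro k hk
  induction k, hk using Nat.le_induction with
  | base => intro m; simp [PowerSeries.coeff_mk]
  | succ k hk ih =>
    intro m
    rw [pow_succ, PowerSeries.coeff_mul, Finset.Nat.sum_antidiagonal_eq_sum_range_succ_mk]
    have hterm : ∀ p ∈ range (m + 1),
        PowerSeries.coeff p ((PowerSeries.mk (fun j => b ^ j) : K⟦X⟧) ^ k) *
          PowerSeries.coeff (m - p) (PowerSeries.mk (fun j => b ^ j))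
        = ((p + (k - 1)).choose (k - 1) : K) * b ^ m := by
      intro p hp
      rw [mem_range, Nat.lt_succ_iff] at hp
      rw [ih p, PowerSeries.coeff_mk]
      have h1 : p + k - 1 = p + (k - 1) := by omega
      have h2 : (p + (k - 1)).choose p = (p + (k - 1)).choose (k - 1) := by
        rw [Nat.choose_symm_add]
      rw [h1, h2, mul_assoc, ← pow_add]
      congr 2
      omega
    rw [Finset.sum_congr rfl hterm, ← Finset.sum_mul]
    have h3 : ∑ p ∈ range (m + 1), ((p + (k - 1)).choose (k - 1) : K)
        = ((m + k).choose k : K) := by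
      have := Nat.sum_Icc_choose (m + (k - 1)) (k - 1)
      rw [← Finset.Ico_add_one_right_eq_Icc, Finset.sum_Ico_eq_sum_range] at this
      have h4 : m + (k - 1) + 1 - (k - 1) = m + 1 := by omega
      rw [h4] at this
      have h5 : m + (k - 1) + 1 = m + k := by omega
      have h6 : k - 1 + 1 = k := by omega
      rw [h5, h6] at this
      rw [← this]
      push_cast
      exact Finset.sum_congr rfl fun p _ => by rw [Nat.add_comm (k-1) p]
    rw [h3]
    congr 2
    have : m + (k + 1) - 1 = m + k := by omega
    rw [this, ← Nat.choose_symm_add]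

lemma coeff_u_pow (a : K) {m k : ℕ} (hk1 : 1 ≤ k) (hkm : k ≤ m) :
    PowerSeries.coeff m ((X * ((1 : K⟦X⟧) + PowerSeries.C a * X)⁻¹) ^ k)
      = ((m - 1).choose (m - k) : K) * (-a) ^ (m - k) := by
  rw [inv_one_add, mul_pow]
  obtain ⟨d, rfl⟩ : ∃ d, m = d + k := ⟨m - k, (Nat.sub_add_cancel hkm).symm⟩
  rw [PowerSeries.coeff_X_pow_mul, coeff_geom_pow (-a) k hk1 d]
  have h1 : d + k - k = d := by omega
  rw [h1]



lemma alt_sum (d : ℕ) :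
    ∑ j ∈ range (d + 1), (-1 : K) ^ (d - j) * (d.choose j : K)
      = if d = 0 then 1 else 0 := by
  have h : ∀ j ∈ range (d + 1),
      (-1 : K) ^ (d - j) * (d.choose j : K) = (-1) ^ d * ((-1) ^ j * (d.choose j : K)) := by
    intro j hj
    rw [mem_range, Nat.lt_succ_iff] at hj
    have h1 : (-1 : K) ^ (d - j) * ((-1) ^ j * (-1) ^ j) = (-1) ^ d * (-1) ^ j := by
      rw [← mul_assoc, ← pow_add, Nat.sub_add_cancel hj]
    have h2 : (-1 : K) ^ j * (-1) ^ j = 1 := by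
      rw [← mul_pow]; norm_num
    rw [h2, mul_one] at h1
    rw [h1]; ring
  rw [Finset.sum_congr rfl h, ← Finset.mul_sum]
  have h3 : ∑ j ∈ range (d + 1), (-1 : K) ^ j * (d.choose j : K)
      = ((if d = 0 then 1 else 0 : ℤ) : K) := by
    rw [← Int.alternating_sum_range_choose, Int.cast_sum]
    exact Finset.sum_congr rfl fun j _ => by push_cast; ring
  rw [h3]
  split_ifs with h0
  · subst h0; simp
  · simp

lemma Tval (N i : ℕ) (hi : i ≤ N) (a : K) :
    ∑ k ∈ range (N + 1),
        (N.choose (N - k) : K) * (-a) ^ (N - k) * (a ^ (k - i) * (k.choose i : K))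
      = if i = N then 1 else 0 := by
  have hsub : Icc i N ⊆ range (N + 1) := fun k hk => by
    rw [mem_Icc] at hk; rw [mem_range]; omega
  rw [← Finset.sum_subset hsub (fun k _ hk => by
    rw [mem_Icc] at hk
    rw [mem_range, Nat.lt_succ_iff] at *
    have : k < i := by omega
    rw [Nat.choose_eq_zero_of_lt this]
    simp)]
  rw [← Finset.Ico_add_one_right_eq_Icc, Finset.sum_Ico_eq_sum_range]
  have hNi : N + 1 - i = (N - i) + 1 := by omega
  rw [hNi]
  set d := N - i with hd
  have hterm : ∀ j ∈ range (d + 1),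
      (N.choose (N - (i + j)) : K) * (-a) ^ (N - (i + j)) *
        (a ^ (i + j - i) * ((i + j).choose i : K))
      = (N.choose i : K) * a ^ d * ((-1) ^ (d - j) * ((d.choose j) : K)) := by
    intro j hj
    rw [mem_range, Nat.lt_succ_iff] at hj
    have hij : i + j ≤ N := by omega
    have e1 : N - (i + j) = d - j := by omega
    have e2 : i + j - i = j := by omega
    have e3 : N.choose (i + j) * (i + j).choose i = N.choose i * (N - i).choose (i + j - i) :=
      Nat.choose_mul (Nat.le_add_right i j)
    have e4 : (N.choose (N - (i + j)) : K) = (N.choose (i + j) : K) := by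
      rw [Nat.choose_symm hij]
    have e6 : (-a : K) ^ (d - j) = (-1) ^ (d - j) * a ^ (d - j) := by
      rw [neg_pow]
    rw [e4, e1, e2, e6]
    have e5 : (N.choose (i + j) : K) * ((i + j).choose i : K)
        = (N.choose i : K) * ((d.choose j) : K) := by
      rw [← Nat.cast_mul, ← Nat.cast_mul, e3, e2, hd]
    have e7 : a ^ (d - j) * a ^ j = a ^ d := by
      rw [← pow_add]; congr 1; omega
    calc (N.choose (i + j) : K) * ((-1) ^ (d - j) * a ^ (d - j)) *
          (a ^ j * ((i + j).choose i : K))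
        = ((N.choose (i + j) : K) * ((i + j).choose i : K)) * ((-1) ^ (d - j) *
            (a ^ (d - j) * a ^ j)) := by ring
      _ = (N.choose i : K) * a ^ d * ((-1) ^ (d - j) * ((d.choose j) : K)) := by
          rw [e5, e7]; ring
  rw [Finset.sum_congr rfl hterm, ← Finset.mul_sum, alt_sum d]
  by_cases h0 : i = N
  · have hd0 : d = 0 := by omega
    rw [if_pos hd0, if_pos h0, hd0]
    subst h0; simp
  · have hd0 : d ≠ 0 := by omega
    rw [if_neg hd0, if_neg h0, mul_zero]

lemma key_range (N : ℕ) (a : K) (c : ℕ → K) :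
    ∑ k ∈ range (N + 1), (N.choose (N - k) : K) * (-a) ^ (N - k) *
      (∑ i ∈ range (k + 1), a ^ (k - i) * (k.choose i : K) * c i) = c N := by
  have hinner : ∀ k ∈ range (N + 1),
      (N.choose (N - k) : K) * (-a) ^ (N - k) *
        (∑ i ∈ range (k + 1), a ^ (k - i) * (k.choose i : K) * c i)
      = ∑ i ∈ range (N + 1),
          (N.choose (N - k) : K) * (-a) ^ (N - k) * (a ^ (k - i) * (k.choose i : K) * c i) := by
    intro k hk
    rw [mem_range, Nat.lt_succ_iff] at hk
    rw [Finset.sum_subset (Finset.range_subset_range.2 (by omega : k + 1 ≤ N + 1))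
      (fun i _ hi => by
        rw [mem_range, Nat.lt_succ_iff] at hi
        rw [Nat.choose_eq_zero_of_lt (by omega : k < i)]
        simp), Finset.mul_sum]
  rw [Finset.sum_congr rfl hinner, Finset.sum_comm]
  have hi2 : ∀ i ∈ range (N + 1),
      (∑ k ∈ range (N + 1),
          (N.choose (N - k) : K) * (-a) ^ (N - k) * (a ^ (k - i) * (k.choose i : K) * c i))
      = (if i = N then 1 else 0) * c i := by
    intro i hi
    rw [mem_range, Nat.lt_succ_iff] at hi
    have hpull : (∑ k ∈ range (N + 1),
          (N.choose (N - k) : K) * (-a) ^ (N - k) * (a ^ (k - i) * (k.choose i : K) * c i))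
        = (∑ k ∈ range (N + 1),
            (N.choose (N - k) : K) * (-a) ^ (N - k) * (a ^ (k - i) * (k.choose i : K))) * c i := by
      rw [Finset.sum_mul]
      exact Finset.sum_congr rfl fun k _ => by ring
    rw [hpull, Tval N i hi a]
  rw [Finset.sum_congr rfl hi2]
  simp only [ite_mul, one_mul, zero_mul]
  rw [Finset.sum_ite_eq' (range (N + 1)) N c]
  simp

lemma key (m : ℕ) (hm : 1 ≤ m) (a : K) (c : ℕ → K) :
    ∑ k ∈ Icc 1 m, ((m - 1).choose (m - k) : K) * (-a) ^ (m - k) *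
      (∑ i ∈ Icc 1 k, a ^ (k - i) * ((k - 1).choose (i - 1) : K) * c i) = c m := by
  obtain ⟨N, rfl⟩ : ∃ N, m = N + 1 := ⟨m - 1, by omega⟩
  rw [← Finset.Ico_add_one_right_eq_Icc, Finset.sum_Ico_eq_sum_range]
  have hN : N + 1 + 1 - 1 = N + 1 := by omega
  rw [hN]
  have hterm : ∀ j ∈ range (N + 1),
      ((N + 1 - 1).choose (N + 1 - (1 + j)) : K) * (-a) ^ (N + 1 - (1 + j)) *
        (∑ i ∈ Icc 1 (1 + j), a ^ (1 + j - i) * ((1 + j - 1).choose (i - 1) : K) * c i)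
      = (N.choose (N - j) : K) * (-a) ^ (N - j) *
        (∑ i ∈ range (j + 1), a ^ (j - i) * (j.choose i : K) * c (1 + i)) := by
    intro j _
    have e1 : N + 1 - 1 = N := by omega
    have e2 : N + 1 - (1 + j) = N - j := by omega
    rw [e1, e2]
    congr 1
    rw [← Finset.Ico_add_one_right_eq_Icc, Finset.sum_Ico_eq_sum_range]
    have e3 : 1 + j + 1 - 1 = j + 1 := by omega
    rw [e3]
    refine Finset.sum_congr rfl fun i _ => ?_
    have e4 : 1 + j - (1 + i) = j - i := by omega
    have e5 : 1 + j - 1 = j := by omega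
    have e6 : 1 + i - 1 = i := by omega
    rw [e4, e5, e6]
  rw [Finset.sum_congr rfl hterm]
  have := key_range N a (fun i => c (1 + i))
  simpa [Nat.add_comm] using this

lemma coeff_prod_geom (n : ℕ) (x : Fin n → K) (m : ℕ) :
    PowerSeries.coeff m (∏ j : Fin n, PowerSeries.mk (fun p => x j ^ p) : K⟦X⟧)
      = hps n m x := by
  rw [PowerSeries.coeff_prod]
  unfold hps
  refine Finset.sum_nbij' (fun l => ⇑l) (fun c => Finsupp.equivFunOnFinite.symm c)
    ?_ ?_ ?_ ?_ ?_
  · intro l hl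
    rw [Finset.mem_finsuppAntidiag] at hl
    rw [Finset.Nat.mem_antidiagonalTuple]
    exact hl.1
  · intro c hc
    rw [Finset.Nat.mem_antidiagonalTuple] at hc
    rw [Finset.mem_finsuppAntidiag]
    constructor
    · rw [← hc]
      exact Finset.sum_congr rfl fun i _ => by simp
    · exact Finset.subset_univ _
  · intro l _
    exact Finsupp.equivFunOnFinite.symm_apply_apply l
  · intro c _
    exact Finsupp.equivFunOnFinite.apply_symm_apply c
  · intro l _
    exact Finset.prod_congr rfl fun i _ => by rw [PowerSeries.coeff_mk]

lemma hps_zero (n : ℕ) (x : Fin n → K) : hps n 0 x = 1 := by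
  unfold hps
  rw [Finset.Nat.antidiagonalTuple_zero_right]
  simp

lemma eps_zero (n : ℕ) (x : Fin n → K) : eps n 0 x = 1 := by
  unfold eps
  simp

lemma coeff_prod_one_add {ι : Type*} [DecidableEq ι] (s : Finset ι) (y : ι → K) (m : ℕ) :
    PowerSeries.coeff m (∏ j ∈ s, ((1 : K⟦X⟧) + PowerSeries.C (y j) * X))
      = ∑ S ∈ Finset.powersetCard m s, ∏ i ∈ S, y i := by
  induction s using Finset.induction generalizing m with
  | empty =>
    cases m with
    | zero => simp
    | succ m =>
      rw [Finset.powersetCard_eq_empty.2 (by simp)]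
      simp [PowerSeries.coeff_one]
  | @insert a s ha ih =>
    rw [Finset.prod_insert ha, add_mul, one_mul]
    rw [map_add]
    have hx : PowerSeries.C (y a) * X * ∏ j ∈ s, ((1 : K⟦X⟧) + PowerSeries.C (y j) * X)
        = PowerSeries.C (y a) * ((∏ j ∈ s, ((1 : K⟦X⟧) + PowerSeries.C (y j) * X)) * X) := by
      ring
    rw [hx, PowerSeries.coeff_C_mul]
    cases m with
    | zero =>
      rw [Finset.powersetCard_zero]
      have : PowerSeries.coeff 0
          ((∏ j ∈ s, ((1 : K⟦X⟧) + PowerSeries.C (y j) * X)) * X) = 0 := by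
        rw [PowerSeries.coeff_zero_eq_constantCoeff, map_mul]
        simp
      rw [this, mul_zero, add_zero, ih]
      simp
    | succ m =>
      have hdisj : Disjoint (Finset.powersetCard (m + 1) s)
          ((Finset.powersetCard m s).image (insert a)) := by
        rw [Finset.disjoint_left]
        intro S hS1 hS2
        rw [Finset.mem_powersetCard] at hS1
        rw [Finset.mem_image] at hS2
        obtain ⟨T, _, rfl⟩ := hS2
        exact ha (hS1.1 (Finset.mem_insert_self a T))
      have hinj : ∀ S ∈ Finset.powersetCard m s, ∀ T ∈ Finset.powersetCard m s,
          insert a S = insert a T → S = T := by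
        intro S hS T hT hST
        rw [Finset.mem_powersetCard] at hS hT
        have haS : a ∉ S := fun h => ha (hS.1 h)
        have haT : a ∉ T := fun h => ha (hT.1 h)
        rw [← Finset.erase_insert haS, ← Finset.erase_insert haT, hST]
      rw [PowerSeries.coeff_succ_mul_X, ih, ih, Finset.powersetCard_succ_insert ha,
        Finset.sum_union hdisj]
      congr 1
      rw [Finset.sum_image hinj, Finset.mul_sum]
      refine Finset.sum_congr rfl fun S hS => ?_
      rw [Finset.mem_powersetCard] at hS
      rw [Finset.prod_insert (fun haS => ha (hS.1 haS))]

end Aux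

open PowerSeries Finset in
/-- in `R[[t]]`,
(i) `1 + ∑_{k≥1} (t(1+αt)⁻¹)^k g_{(k)} = ∏_{j=1}^n (1-xⱼt)⁻¹` and
(ii) `1 + ∑_{k≥1} (t(1+βt)⁻¹)^k g_{(1^k)} = ∏_{j=1}^n (1+xⱼt)`.
The infinite sums make sense coefficientwise, the `k`-th term having `t`-adic order `≥ k`;
accordingly the identities are stated coefficientwise, the coefficient of `t^m` of the
infinite sum being that of the partial sum over `1 ≤ k ≤ m`. -/
theorem stmt11 {K : Type*} [Field K] (n : ℕ) (α β : K) (x : Fin n → K) :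
    (∀ m : ℕ,
        PowerSeries.coeff m
          ((1 : PowerSeries K) + ∑ k ∈ Finset.Icc 1 m,
            (PowerSeries.X * ((1 : PowerSeries K) + PowerSeries.C α * PowerSeries.X)⁻¹) ^ k *
              PowerSeries.C (grow n α x k)) =
        PowerSeries.coeff m
          (∏ j : Fin n, ((1 : PowerSeries K) - PowerSeries.C (x j) * PowerSeries.X)⁻¹)) ∧
    (∀ m : ℕ,
        PowerSeries.coeff m
          ((1 : PowerSeries K) + ∑ k ∈ Finset.Icc 1 m,
            (PowerSeries.X * ((1 : PowerSeries K) + PowerSeries.C β * PowerSeries.X)⁻¹) ^ k *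
              PowerSeries.C (gcol n β x k)) =
        PowerSeries.coeff m
          (∏ j : Fin n, ((1 : PowerSeries K) + PowerSeries.C (x j) * PowerSeries.X))) := by
  constructor
  · intro m
    rw [show (∏ j : Fin n, ((1 : PowerSeries K) - PowerSeries.C (x j) * PowerSeries.X)⁻¹)
        = ∏ j : Fin n, PowerSeries.mk (fun p => x j ^ p) from
      Finset.prod_congr rfl fun j _ => inv_one_sub (x j), coeff_prod_geom]
    rw [map_add, PowerSeries.coeff_one, map_sum]
    cases m with
    | zero => simp [hps_zero]
    | succ N =>
      rw [if_neg (Nat.succ_ne_zero N), zero_add]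
      have hterm : ∀ k ∈ Finset.Icc 1 (N + 1),
          PowerSeries.coeff (N + 1)
            ((PowerSeries.X * ((1 : PowerSeries K) + PowerSeries.C α * PowerSeries.X)⁻¹) ^ k *
              PowerSeries.C (grow n α x k))
          = ((N + 1 - 1).choose (N + 1 - k) : K) * (-α) ^ (N + 1 - k) * grow n α x k := by
        intro k hk
        rw [Finset.mem_Icc] at hk
        rw [PowerSeries.coeff_mul_C, coeff_u_pow α hk.1 hk.2]
      rw [Finset.sum_congr rfl hterm]
      exact key (N + 1) (by omega) α (fun i => hps n i x)
  · intro m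
    rw [coeff_prod_one_add Finset.univ x m]
    rw [map_add, PowerSeries.coeff_one, map_sum]
    cases m with
    | zero => simp
    | succ N =>
      rw [if_neg (Nat.succ_ne_zero N), zero_add]
      have hterm : ∀ k ∈ Finset.Icc 1 (N + 1),
          PowerSeries.coeff (N + 1)
            ((PowerSeries.X * ((1 : PowerSeries K) + PowerSeries.C β * PowerSeries.X)⁻¹) ^ k *
              PowerSeries.C (gcol n β x k))
          = ((N + 1 - 1).choose (N + 1 - k) : K) * (-β) ^ (N + 1 - k) * gcol n β x k := by
        intro k hk
        rw [Finset.mem_Icc] at hk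
        rw [PowerSeries.coeff_mul_C, coeff_u_pow β hk.1 hk.2]
      rw [Finset.sum_congr rfl hterm]
      exact key (N + 1) (by omega) β (fun i => eps n i x)
end
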